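/- arXiv:0804.1936 — 2 statements merged into one kernel-verified Lean document; each statement's English description precedes it below -/
import Mathlib

section
/- If Ψ is a random unitary channel on a finite-dimensional Hilbert space A (i.e. Ψ(X) = ∑_i p_i U_i X U_i* for unitaries U_i and a probability distribution p_i), then for any unitarily invariant norm |||·||| on operators on A ⊗ B and any density operator ρ on A ⊗ B, |||(Ψ ⊗ id_B)(ρ) − (I_A/dim A) ⊗ Tr_A ρ||| ≤ |||ρ − (I_A/dim A) ⊗ Tr_A ρ|||. -/
open Matrix
open scoped Kronecker ComplexOrder

/-- Partial trace over the first tensor factor. -/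
noncomputable def ptraceA {a b : Type*} [Fintype a] (M : Matrix (a × b) (a × b) ℂ) :
    Matrix b b ℂ := fun i j => ∑ x : a, M (x, i) (x, j)

/-- A density operator: positive semidefinite with unit trace. -/
def IsDensity {n : Type*} [Fintype n] (ρ : Matrix n n ℂ) : Prop :=
  ρ.PosSemidef ∧ ρ.trace = 1

lemma kron_conjTranspose {a b : Type*} (A : Matrix a a ℂ) (B : Matrix b b ℂ) :
    (A ⊗ₖ B)ᴴ = Aᴴ ⊗ₖ Bᴴ := by
  ext ⟨i, j⟩ ⟨k, l⟩
  simp [Matrix.conjTranspose_apply, Matrix.kroneckerMap_apply, mul_comm]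

lemma kron_unitary {a b : Type*} [Fintype a] [DecidableEq a] [Fintype b] [DecidableEq b]
    (A : Matrix a a ℂ) (hA : A ∈ Matrix.unitaryGroup a ℂ) :
    (A ⊗ₖ (1 : Matrix b b ℂ)) ∈ Matrix.unitaryGroup (a × b) ℂ := by
  rw [Matrix.mem_unitaryGroup_iff]
  have : star (A ⊗ₖ (1 : Matrix b b ℂ)) = Aᴴ ⊗ₖ (1 : Matrix b b ℂ)ᴴ := kron_conjTranspose A 1
  rw [this, ← Matrix.mul_kronecker_mul,
    show A * Aᴴ = 1 from (Matrix.mem_unitaryGroup_iff).mp hA]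
  simp

lemma f_sum_le {n : Type*} (s : Finset n) {a b : Type*} [Fintype a] [Fintype b]
    (f : Matrix (a × b) (a × b) ℂ → ℝ)
    (hadd : ∀ X Y, f (X + Y) ≤ f X + f Y)
    (hzero : f 0 = 0)
    (g : n → Matrix (a × b) (a × b) ℂ) :
    f (∑ i ∈ s, g i) ≤ ∑ i ∈ s, f (g i) := by
  induction s using Finset.cons_induction with
  | empty => simp [hzero]
  | cons x s h ih =>
    rw [Finset.sum_cons, Finset.sum_cons]
    exact le_trans (hadd _ _) (by linarith)

/-- If `Ψ` is a random unitary channel on `A` (given by unitaries `U i` with probabilities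
`p i`), then for any unitarily invariant norm `f` on operators on `A ⊗ B` and any density
operator `ρ` on `A ⊗ B`, applying `Ψ ⊗ id` cannot increase the distance to
`(I_A / dim A) ⊗ Tr_A ρ`. -/
theorem random_unitary_does_not_increase_distance_to_mixed
    {a b : Type*} [Fintype a] [DecidableEq a] [Fintype b] [DecidableEq b]
    (f : Matrix (a × b) (a × b) ℂ → ℝ)
    (hadd : ∀ X Y, f (X + Y) ≤ f X + f Y)
    (hsmul : ∀ (c : ℂ) (X), f (c • X) = ‖c‖ * f X)
    (hinv : ∀ U V X, U ∈ Matrix.unitaryGroup (a × b) ℂ → V ∈ Matrix.unitaryGroup (a × b) ℂ →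
      f (U * X * V) = f X)
    (nu : ℕ) (p : Fin nu → ℝ) (U : Fin nu → Matrix a a ℂ)
    (hp : ∀ i, 0 ≤ p i) (hp1 : ∑ i, p i = 1)
    (hU : ∀ i, U i ∈ Matrix.unitaryGroup a ℂ)
    (ρ : Matrix (a × b) (a × b) ℂ) (hρ : IsDensity ρ) :
    f ((∑ i, (p i : ℂ) •
          ((U i ⊗ₖ (1 : Matrix b b ℂ)) * ρ * (U i ⊗ₖ (1 : Matrix b b ℂ))ᴴ))
        - ((1 : ℂ) / (Fintype.card a : ℂ)) • ((1 : Matrix a a ℂ) ⊗ₖ ptraceA ρ))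
      ≤ f (ρ - ((1 : ℂ) / (Fintype.card a : ℂ)) • ((1 : Matrix a a ℂ) ⊗ₖ ptraceA ρ)) := by
  set σ : Matrix (a × b) (a × b) ℂ :=
    ((1 : ℂ) / (Fintype.card a : ℂ)) • ((1 : Matrix a a ℂ) ⊗ₖ ptraceA ρ) with hσ
  have hzero : f 0 = 0 := by
    have := hsmul 0 0
    simpa using this
  have hp1' : (∑ i, (p i : ℂ)) = 1 := by
    rw [← Complex.ofReal_sum, hp1, Complex.ofReal_one]
  -- σ is invariant under conjugation by U i ⊗ 1
  have hσinv : ∀ i, (U i ⊗ₖ (1 : Matrix b b ℂ)) * σ * (U i ⊗ₖ (1 : Matrix b b ℂ))ᴴ = σ := by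
    intro i
    rw [hσ, Matrix.mul_smul, Matrix.smul_mul, kron_conjTranspose,
      ← Matrix.mul_kronecker_mul, ← Matrix.mul_kronecker_mul,
      show U i * (1 : Matrix a a ℂ) * (U i)ᴴ = 1 by
        rw [Matrix.mul_one]; exact (Matrix.mem_unitaryGroup_iff).mp (hU i)]
    simp
  -- rewrite LHS matrix as sum of conjugates of (ρ - σ)
  have key : (∑ i, (p i : ℂ) •
        ((U i ⊗ₖ (1 : Matrix b b ℂ)) * ρ * (U i ⊗ₖ (1 : Matrix b b ℂ))ᴴ)) - σ
      = ∑ i, (p i : ℂ) •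
        ((U i ⊗ₖ (1 : Matrix b b ℂ)) * (ρ - σ) * (U i ⊗ₖ (1 : Matrix b b ℂ))ᴴ) := by
    have : ∀ i, (p i : ℂ) •
        ((U i ⊗ₖ (1 : Matrix b b ℂ)) * (ρ - σ) * (U i ⊗ₖ (1 : Matrix b b ℂ))ᴴ)
        = (p i : ℂ) •
        ((U i ⊗ₖ (1 : Matrix b b ℂ)) * ρ * (U i ⊗ₖ (1 : Matrix b b ℂ))ᴴ) - (p i : ℂ) • σ := by
      intro i
      rw [Matrix.mul_sub, Matrix.sub_mul, smul_sub, hσinv i]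
    rw [Finset.sum_congr rfl (fun i _ => this i), Finset.sum_sub_distrib,
      ← Finset.sum_smul, hp1', one_smul]
  rw [key]
  calc f (∑ i, (p i : ℂ) •
        ((U i ⊗ₖ (1 : Matrix b b ℂ)) * (ρ - σ) * (U i ⊗ₖ (1 : Matrix b b ℂ))ᴴ))
      ≤ ∑ i, f ((p i : ℂ) •
        ((U i ⊗ₖ (1 : Matrix b b ℂ)) * (ρ - σ) * (U i ⊗ₖ (1 : Matrix b b ℂ))ᴴ)) :=
        f_sum_le _ f hadd hzero _
    _ = ∑ i, p i * f (ρ - σ) := by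
        refine Finset.sum_congr rfl fun i _ => ?_
        rw [hsmul, Complex.norm_real, Real.norm_eq_abs, abs_of_nonneg (hp i),
          ← Matrix.star_eq_conjTranspose,
          hinv _ _ _ (kron_unitary (U i) (hU i))
            (Unitary.star_mem (kron_unitary (U i) (hU i)))]
    _ = f (ρ - σ) := by rw [← Finset.sum_mul, hp1, one_mul]
end

section
/- With Φ' as constructed from Φ, if dim A ≥ dim H, m = log₂(dim A) ≥ 3, and ρ is a density operator supported on S_0⊥, then S(Φ'(ρ)) ≥ log₂(dim A · dim H) − m/2^{m−3}. -/
open Matrix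
open scoped Kronecker ComplexOrder

/-- Partial trace over the second tensor factor. -/
noncomputable def ptraceB {k b : Type*} [Fintype b] (M : Matrix (k × b) (k × b) ℂ) :
    Matrix k k ℂ := fun i j => ∑ y : b, M (i, y) (j, y)

variable {h k a b : Type*}
  [Fintype h] [DecidableEq h] [Fintype k] [DecidableEq k]
  [Fintype a] [DecidableEq a] [Fintype b] [DecidableEq b]

/-- Projection onto the subspace `S₀ = |0⟩ ⊗ H` of `A ⊗ H`. -/
noncomputable def projS0 (a0 : a) : Matrix (a × h) (a × h) ℂ :=
  Matrix.single a0 a0 1 ⊗ₖ (1 : Matrix h h ℂ)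

/-- The dephasing channel between `S₀` and `S₀⊥`. -/
noncomputable def Dchan (a0 : a) (ρ : Matrix (a × h) (a × h) ℂ) :
    Matrix (a × h) (a × h) ℂ :=
  projS0 a0 * ρ * projS0 a0 + (1 - projS0 a0) * ρ * (1 - projS0 a0)

/-- The conditional mixing channel: identity on `S₀`, complete depolarization on `S₀⊥`. -/
noncomputable def Mchan (a0 : a) (ρ : Matrix (a × h) (a × h) ℂ) :
    Matrix (a × h) (a × h) ℂ :=
  projS0 a0 * ρ * projS0 a0 +
    (((1 - projS0 a0 (h := h)) * ρ).trace *
      ((1 : ℂ) / (((Fintype.card a : ℂ) - 1) * (Fintype.card h : ℂ)))) •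
      (((1 : Matrix a a ℂ) - Matrix.single a0 a0 1) ⊗ₖ (1 : Matrix h h ℂ))

/-- The channel `N_B` replacing the `B` factor by the maximally mixed state. -/
noncomputable def Nchan (ρ : Matrix (k × b) (k × b) ℂ) : Matrix (k × b) (k × b) ℂ :=
  ((1 : ℂ) / (Fintype.card b : ℂ)) • (ptraceB ρ ⊗ₖ (1 : Matrix b b ℂ))

/-- The channel `Φ` with Stinespring dilation `Φ(σ) = Tr_B (U (|0⟩⟨0| ⊗ σ) U*)`. -/
noncomputable def PhiChan (a0 : a) (U : Matrix (k × b) (a × h) ℂ)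
    (σ : Matrix h h ℂ) : Matrix k k ℂ :=
  ptraceB (U * (Matrix.single a0 a0 1 ⊗ₖ σ) * Uᴴ)

/-- The random unitary approximation `Φ'(ρ) = N_B (U ((M ∘ D)(ρ)) U*)`. -/
noncomputable def PhiPrime (a0 : a) (U : Matrix (k × b) (a × h) ℂ)
    (ρ : Matrix (a × h) (a × h) ℂ) : Matrix (k × b) (k × b) ℂ :=
  Nchan (U * Mchan a0 (Dchan a0 ρ) * Uᴴ)


/-- The von Neumann entropy (in bits) of a matrix, via its eigenvalues. -/
noncomputable def vnEntropy {n : Type*} [Fintype n] [DecidableEq n]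
    (ρ : Matrix n n ℂ) : ℝ :=
  if h : ρ.IsHermitian then (∑ i, Real.negMulLog (h.eigenvalues i)) / Real.log 2 else 0


/-! ### Auxiliary lemmas -/

section Aux

lemma ptraceB_posSemidef' {k b : Type*} [Fintype k] [Fintype b] [DecidableEq b]
    {M : Matrix (k × b) (k × b) ℂ} (hM : M.PosSemidef) :
    (ptraceB M).PosSemidef := by
  refine Matrix.PosSemidef.of_dotProduct_mulVec_nonneg ?_ ?_
  · ext i j
    simp only [conjTranspose_apply, ptraceB, star_sum]
    refine Finset.sum_congr rfl fun y _ => ?_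
    have := congrFun (congrFun hM.1 (i, y)) (j, y)
    simpa [conjTranspose_apply] using this
  · intro x
    have hy : ∀ y : b, (star (fun p : k × b => if p.2 = y then x p.1 else 0)) ⬝ᵥ
        M *ᵥ (fun p : k × b => if p.2 = y then x p.1 else 0)
        = ∑ i, ∑ j, star (x i) * (M (i, y) (j, y) * x j) := by
      intro y
      simp only [dotProduct, mulVec, Fintype.sum_prod_type, Pi.star_apply,
        apply_ite (star : ℂ → ℂ), star_zero, ite_mul, mul_ite, mul_zero, zero_mul,
        Finset.sum_ite_eq', Finset.mem_univ, if_true]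
      refine Finset.sum_congr rfl fun i _ => ?_
      simp [Finset.mul_sum, Finset.sum_ite_eq', dotProduct]
    have key : star x ⬝ᵥ (ptraceB M) *ᵥ x
        = ∑ y : b, ∑ i, ∑ j, star (x i) * (M (i, y) (j, y) * x j) := by
      calc star x ⬝ᵥ (ptraceB M) *ᵥ x
          = ∑ i, ∑ j, ∑ y, star (x i) * (M (i, y) (j, y) * x j) := by
            simp only [dotProduct, mulVec, ptraceB, Finset.mul_sum, Finset.sum_mul, Pi.star_apply]
        _ = ∑ i, ∑ y, ∑ j, star (x i) * (M (i, y) (j, y) * x j) :=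
            Finset.sum_congr rfl fun i _ => Finset.sum_comm
        _ = ∑ y, ∑ i, ∑ j, star (x i) * (M (i, y) (j, y) * x j) := Finset.sum_comm
    rw [key]
    refine Finset.sum_nonneg fun y _ => ?_
    have := hM.dotProduct_mulVec_nonneg (fun p : k × b => if p.2 = y then x p.1 else 0)
    rwa [hy y] at this

lemma kronecker_one_posSemidef' {k b : Type*} [Fintype k] [Fintype b] [DecidableEq b]
    {A : Matrix k k ℂ} (hA : A.PosSemidef) :
    (A ⊗ₖ (1 : Matrix b b ℂ)).PosSemidef := by
  refine Matrix.PosSemidef.of_dotProduct_mulVec_nonneg ?_ ?_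
  · ext p q
    simp only [conjTranspose_apply, kroneckerMap_apply, one_apply, star_mul']
    have := congrFun (congrFun hA.1 p.1) q.1
    simp only [conjTranspose_apply] at this
    rw [← this]
    simp [apply_ite (star : ℂ → ℂ), eq_comm, mul_comm]
  · intro x
    have hy : ∀ y : b, (star (fun i : k => x (i, y))) ⬝ᵥ A *ᵥ (fun i : k => x (i, y))
        = ∑ i, ∑ j, star (x (i, y)) * (A i j * x (j, y)) := by
      intro y
      simp [dotProduct, mulVec, Finset.mul_sum]
    have key : star x ⬝ᵥ (A ⊗ₖ (1 : Matrix b b ℂ)) *ᵥ x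
        = ∑ y : b, ∑ i, ∑ j, star (x (i, y)) * (A i j * x (j, y)) := by
      calc star x ⬝ᵥ (A ⊗ₖ (1 : Matrix b b ℂ)) *ᵥ x
          = ∑ i, ∑ y, ∑ j, star (x (i, y)) * (A i j * x (j, y)) := by
            simp only [dotProduct, mulVec, kroneckerMap_apply, one_apply,
              Fintype.sum_prod_type, mul_ite, ite_mul, mul_zero, zero_mul, mul_one,
              Finset.mul_sum, Finset.sum_ite_eq', Finset.mem_univ, if_true]
            refine Finset.sum_congr rfl fun i _ => Finset.sum_congr rfl fun y _ => ?_
            rw [Finset.sum_comm]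
            simp [Finset.sum_ite_eq, Pi.star_apply]
        _ = ∑ y, ∑ i, ∑ j, star (x (i, y)) * (A i j * x (j, y)) := Finset.sum_comm
    rw [key]
    refine Finset.sum_nonneg fun y _ => ?_
    have := hA.dotProduct_mulVec_nonneg (fun i : k => x (i, y))
    rwa [hy y] at this

lemma smul_posSemidef' {n : Type*} [Fintype n] {X : Matrix n n ℂ} (hX : X.PosSemidef)
    {r : ℝ} (hr : 0 ≤ r) : (((r : ℂ)) • X).PosSemidef := by
  refine Matrix.PosSemidef.of_dotProduct_mulVec_nonneg ?_ ?_
  · rw [Matrix.IsHermitian, conjTranspose_smul, hX.1.eq]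
    congr 1
    simp
  · intro x
    rw [smul_mulVec, dotProduct_smul, smul_eq_mul]
    exact mul_nonneg (by exact_mod_cast Complex.zero_le_real.mpr hr) (hX.dotProduct_mulVec_nonneg x)

lemma trace_eq_sum_eigenvalues' {n : Type*} [Fintype n] [DecidableEq n]
    {A : Matrix n n ℂ} (hA : A.IsHermitian) :
    A.trace = ∑ i, (hA.eigenvalues i : ℂ) := by
  exact hA.trace_eq_sum_eigenvalues

lemma eigenvalue_le_of_smul_one_sub' {n : Type*} [Fintype n] [DecidableEq n]
    {A : Matrix n n ℂ} (hA : A.IsHermitian) {c : ℝ}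
    (hle : (((c : ℂ) • (1 : Matrix n n ℂ)) - A).PosSemidef) (i : n) :
    hA.eigenvalues i ≤ c := by
  set v := hA.eigenvectorBasis i with hv
  have hnorm : (star (v : n → ℂ)) ⬝ᵥ (v : n → ℂ) = 1 := by
    have h1 : (inner ℂ v v : ℂ) = star (v : n → ℂ) ⬝ᵥ (v : n → ℂ) :=
      by rw [EuclideanSpace.inner_eq_star_dotProduct, dotProduct_comm]
    rw [← h1, inner_self_eq_norm_sq_to_K, hA.eigenvectorBasis.orthonormal.1 i]
    norm_num
  have h0 := hle.dotProduct_mulVec_nonneg (v : n → ℂ)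
  rw [sub_mulVec, smul_mulVec, one_mulVec, dotProduct_sub, dotProduct_smul, hnorm,
    smul_eq_mul, mul_one] at h0
  have hre := (Complex.le_def.mp h0).1
  rw [hA.eigenvalues_eq i]
  simp only [Complex.sub_re, Complex.zero_re, Complex.ofReal_re] at hre
  simpa [RCLike.re_to_complex] using hre

lemma entropy_ge_of_le' {n : Type*} [Fintype n] [DecidableEq n]
    {τ : Matrix n n ℂ} (hτ : τ.PosSemidef) (htr : τ.trace = 1)
    {c : ℝ} (hc : 0 < c)
    (hle : (((c : ℂ) • (1 : Matrix n n ℂ)) - τ).PosSemidef) :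
    Real.logb 2 (1 / c) ≤ vnEntropy τ := by
  have hherm := hτ.1
  have hsum : ∑ i, hherm.eigenvalues i = 1 := by
    have h1 := trace_eq_sum_eigenvalues' hherm
    rw [htr] at h1
    have h2 : ((1 : ℝ) : ℂ) = ((∑ i, hherm.eigenvalues i : ℝ) : ℂ) := by push_cast [h1]; ring
    exact_mod_cast h2.symm
  have hbound : ∀ i, Real.negMulLog (hherm.eigenvalues i) ≥
      hherm.eigenvalues i * Real.log (1 / c) := by
    intro i
    have h0 : 0 ≤ hherm.eigenvalues i := hτ.eigenvalues_nonneg i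
    have h1 : hherm.eigenvalues i ≤ c := eigenvalue_le_of_smul_one_sub' hherm hle i
    rcases eq_or_lt_of_le h0 with hz | hz
    · simp [← hz, Real.negMulLog]
    · rw [Real.negMulLog, Real.log_div, Real.log_one]
      · have := Real.log_le_log hz h1
        nlinarith
      · norm_num
      · exact ne_of_gt hc
  rw [vnEntropy, dif_pos hherm, Real.logb]
  gcongr
  calc Real.log (1 / c) = (∑ i, hherm.eigenvalues i) * Real.log (1 / c) := by rw [hsum, one_mul]
    _ = ∑ i, hherm.eigenvalues i * Real.log (1 / c) := Finset.sum_mul _ _ _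
    _ ≤ ∑ i, Real.negMulLog (hherm.eigenvalues i) := Finset.sum_le_sum fun i _ => hbound i

lemma kronecker_conjTranspose' {m n : Type*} (A : Matrix m m ℂ) (B : Matrix n n ℂ) :
    (A ⊗ₖ B)ᴴ = Aᴴ ⊗ₖ Bᴴ := by
  ext p q
  simp [conjTranspose_apply, kroneckerMap_apply, star_mul', mul_comm]

lemma sub_kronecker' {m n : Type*} (A B : Matrix m m ℂ) (C : Matrix n n ℂ) :
    (A - B) ⊗ₖ C = A ⊗ₖ C - B ⊗ₖ C := by
  ext p q
  simp [kroneckerMap_apply, sub_mul]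

lemma projS0_mul_projS0 (a0 : a) : projS0 (h := h) a0 * projS0 a0 = projS0 a0 := by
  rw [projS0, ← mul_kronecker_mul, single_mul_single_same, one_mul, mul_one]

lemma projS0_conjTranspose (a0 : a) : (projS0 (h := h) a0)ᴴ = projS0 a0 := by
  rw [projS0, kronecker_conjTranspose', conjTranspose_one]
  congr 2
  ext i j
  simp [conjTranspose_apply, single, and_comm]

lemma Qmat_eq (a0 : a) : ((1 : Matrix a a ℂ) - Matrix.single a0 a0 1) ⊗ₖ (1 : Matrix h h ℂ)
    = 1 - projS0 (h := h) a0 := by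
  ext p q
  rcases p with ⟨i, x⟩; rcases q with ⟨j, y⟩
  by_cases hij : i = j <;> by_cases hxy : x = y <;>
    simp [projS0, kroneckerMap_apply, one_apply, Prod.ext_iff, hij, hxy, sub_mul]

lemma one_sub_projS0_mul_self (a0 : a) :
    (1 - projS0 (h := h) a0) * (1 - projS0 a0) = 1 - projS0 a0 := by
  rw [mul_sub, sub_mul, sub_mul, one_mul, mul_one, projS0_mul_projS0, one_mul, sub_self,
    sub_zero]

lemma one_sub_projS0_conjTranspose (a0 : a) :
    (1 - projS0 (h := h) a0)ᴴ = 1 - projS0 a0 := by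
  rw [conjTranspose_sub, conjTranspose_one, projS0_conjTranspose]

lemma phiPrime_eq (a0 : a) (U : Matrix (k × b) (a × h) ℂ)
    (ρ : Matrix (a × h) (a × h) ℂ) (hherm : ρ.IsHermitian) (htr : ρ.trace = 1)
    (hsupp : projS0 (h := h) a0 * ρ = 0) :
    PhiPrime a0 U ρ
      = (((1 : ℂ) / (Fintype.card b : ℂ)) *
          ((1 : ℂ) / (((Fintype.card a : ℂ) - 1) * (Fintype.card h : ℂ)))) •
        (ptraceB (U * (1 - projS0 (h := h) a0) * Uᴴ) ⊗ₖ (1 : Matrix b b ℂ)) := by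
  have hρP : ρ * projS0 (h := h) a0 = 0 := by
    have := congrArg conjTranspose hsupp
    rwa [conjTranspose_mul, projS0_conjTranspose, hherm.eq, conjTranspose_zero] at this
  have hD : Dchan a0 ρ = ρ := by
    rw [Dchan, hsupp]
    simp only [zero_mul, mul_zero, zero_add]
    rw [sub_mul, one_mul, hsupp, sub_zero, mul_sub, mul_one, hρP, sub_zero]
  have htr1 : ((1 - projS0 (h := h) a0) * ρ).trace = 1 := by
    rw [sub_mul, one_mul, hsupp, sub_zero, htr]
  have hM : Mchan a0 ρ
      = ((1 : ℂ) / (((Fintype.card a : ℂ) - 1) * (Fintype.card h : ℂ))) •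
        (1 - projS0 (h := h) a0) := by
    rw [Mchan, hsupp]
    simp only [zero_mul, mul_zero, zero_add]
    rw [htr1, one_mul, Qmat_eq]
  have hptr : ∀ (z : ℂ) (X : Matrix (k × b) (k × b) ℂ), ptraceB (z • X) = z • ptraceB X := by
    intro z X
    ext i j
    simp [ptraceB, Finset.mul_sum]
  rw [PhiPrime, hD, hM, Matrix.mul_smul, Matrix.smul_mul, Nchan, hptr, smul_kronecker,
    smul_smul]

lemma ptraceB_sub' {M N : Matrix (k × b) (k × b) ℂ} :
    ptraceB (M - N) = ptraceB M - ptraceB N := by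
  ext i j
  simp [ptraceB, Finset.sum_sub_distrib]

lemma ptraceB_one' : ptraceB (1 : Matrix (k × b) (k × b) ℂ)
    = ((Fintype.card b : ℂ)) • (1 : Matrix k k ℂ) := by
  ext i j
  by_cases hij : i = j <;> simp [ptraceB, one_apply, Prod.ext_iff, hij, Finset.sum_ite_eq]

lemma trace_ptraceB' (M : Matrix (k × b) (k × b) ℂ) : (ptraceB M).trace = M.trace := by
  rw [Matrix.trace, Matrix.trace, Fintype.sum_prod_type]
  simp [ptraceB, Matrix.diag]

lemma arith_bound (A H : ℝ) (hA : 8 ≤ A) (hH : 1 ≤ H) (hm : 3 ≤ Real.logb 2 A) :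
    Real.logb 2 (A * H) - Real.logb 2 A / (2 : ℝ) ^ (Real.logb 2 A - 3)
      ≤ Real.logb 2 ((A - 1) * H) := by
  have hA0 : (0:ℝ) < A := by linarith
  have hA1 : (0:ℝ) < A - 1 := by linarith
  have hH0 : (0:ℝ) < H := by linarith
  have hpow : (2 : ℝ) ^ (Real.logb 2 A - 3) = A / 8 := by
    rw [Real.rpow_sub (by norm_num : (0:ℝ) < 2), Real.rpow_logb (by norm_num) (by norm_num) hA0]
    norm_num
  rw [hpow, Real.logb_mul (ne_of_gt hA0) (ne_of_gt hH0),
    Real.logb_mul (ne_of_gt hA1) (ne_of_gt hH0)]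
  have key : Real.logb 2 A - Real.logb 2 (A - 1) ≤ Real.logb 2 A / (A / 8) := by
    have hlog : Real.log A - Real.log (A - 1) ≤ 1 / (A - 1) := by
      have h1 : Real.log A - Real.log (A - 1) = Real.log (A / (A - 1)) := by
        rw [Real.log_div (ne_of_gt hA0) (ne_of_gt hA1)]
      rw [h1]
      have h2 := Real.log_le_sub_one_of_pos (show (0:ℝ) < A / (A - 1) by positivity)
      have h3 : A / (A - 1) - 1 = 1 / (A - 1) := by field_simp; ring
      linarith
    have hl2 : (0.6931471803 : ℝ) < Real.log 2 := Real.log_two_gt_d9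
    have hl2' : (0:ℝ) < Real.log 2 := by linarith
    rw [Real.logb, Real.logb, div_sub_div_same]
    rw [div_le_div_iff₀ hl2' (by positivity : (0:ℝ) < A / 8)]
    have hm' : 3 * Real.log 2 ≤ Real.log A := by
      rw [Real.logb] at hm
      calc 3 * Real.log 2 ≤ Real.log A / Real.log 2 * Real.log 2 := by
            apply mul_le_mul_of_nonneg_right hm (le_of_lt hl2')
        _ = Real.log A := by field_simp
    have h4 : (Real.log A - Real.log (A - 1)) * (A / 8) ≤ (1 / (A - 1)) * (A / 8) := by
      apply mul_le_mul_of_nonneg_right hlog (by positivity)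
    have e1 : (2.07 : ℝ) ≤ Real.log A := by nlinarith
    have h5 : (1 / (A - 1)) * (A / 8) ≤ Real.log A := by
      rw [div_mul_div_comm, one_mul, div_le_iff₀ (by positivity : (0:ℝ) < (A-1)*8)]
      nlinarith
    have h6 : Real.log A / Real.log 2 * Real.log 2 = Real.log A := by field_simp
    linarith
  linarith

end Aux

/-- If `dim A ≥ dim H` and `m = log₂ (dim A) ≥ 3`, then on density operators supported on
`S₀⊥` the output entropy of `Φ'` satisfies
`S(Φ'(ρ)) ≥ log₂(dim A · dim H) − m / 2^(m−3)`. -/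
theorem phiPrime_entropy_S0perp (a0 : a) (U : Matrix (k × b) (a × h) ℂ)
    (hU : U * Uᴴ = 1) (hU' : Uᴴ * U = 1)
    (hdim : Fintype.card h ≤ Fintype.card a)
    (hm : 3 ≤ Real.logb 2 (Fintype.card a))
    (ρ : Matrix (a × h) (a × h) ℂ) (hρ : IsDensity ρ)
    (hsupp : projS0 (h := h) a0 * ρ = 0) :
    Real.logb 2 ((Fintype.card a : ℝ) * (Fintype.card h : ℝ)) -
        Real.logb 2 (Fintype.card a) /
          (2 : ℝ) ^ (Real.logb 2 (Fintype.card a) - 3)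
      ≤ vnEntropy (PhiPrime a0 U ρ) := by
  classical
  -- Cardinality facts
  have hne : Nonempty (a × h) := by
    by_contra hn
    rw [not_nonempty_iff] at hn
    have h0 : ρ.trace = 0 := by simp [Matrix.trace]
    rw [hρ.2] at h0
    exact one_ne_zero h0
  have hna : Nonempty a := hne.elim fun p => ⟨p.1⟩
  have hnh : Nonempty h := hne.elim fun p => ⟨p.2⟩
  have hha : 1 ≤ Fintype.card h := Fintype.card_pos
  have hA0 : (0:ℝ) < Fintype.card a := by
    exact_mod_cast Fintype.card_pos (α := a)
  have hA8 : (8:ℝ) ≤ (Fintype.card a : ℝ) := by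
    have := (Real.le_logb_iff_rpow_le (by norm_num) hA0).mp hm
    have h8 : (2:ℝ) ^ (3:ℝ) = 8 := by
      rw [show (3:ℝ) = ((3:ℕ):ℝ) by norm_num, Real.rpow_natCast]; norm_num
    linarith [h8 ▸ this]
  have hca8 : 8 ≤ Fintype.card a := by exact_mod_cast hA8
  have hcard_eq : Fintype.card k * Fintype.card b = Fintype.card a * Fintype.card h := by
    have h1 : (Uᴴ * U).trace = (U * Uᴴ).trace := Matrix.trace_mul_comm _ _
    rw [hU, hU', Matrix.trace_one, Matrix.trace_one] at h1
    have : ((Fintype.card (a × h) : ℕ) : ℂ) = ((Fintype.card (k × b) : ℕ) : ℂ) := by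
      exact_mod_cast h1
    have := Nat.cast_injective this
    simpa [Fintype.card_prod] using this.symm
  have hb1 : 1 ≤ Fintype.card b := by
    rcases Nat.eq_zero_or_pos (Fintype.card b) with hb0 | hb0
    · exfalso
      rw [hb0, mul_zero] at hcard_eq
      have := hcard_eq.symm
      have h1 : 0 < Fintype.card a * Fintype.card h :=
        Nat.mul_pos (by omega) hha
      omega
    · exact hb0
  -- key nonzero complex scalars
  have hAne : ((Fintype.card a : ℂ) - 1) ≠ 0 := by
    have : (Fintype.card a : ℂ) ≠ 1 := by
      exact_mod_cast (show (Fintype.card a : ℕ) ≠ 1 by omega)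
    exact sub_ne_zero.mpr this
  have hHne : ((Fintype.card h : ℂ)) ≠ 0 := by
    exact_mod_cast (show (Fintype.card h : ℕ) ≠ 0 by omega)
  have hBne : ((Fintype.card b : ℂ)) ≠ 0 := by
    exact_mod_cast (show (Fintype.card b : ℕ) ≠ 0 by omega)
  -- the projections
  set P : Matrix (a × h) (a × h) ℂ := projS0 (h := h) a0 with hPdef
  set S : Matrix (k × b) (k × b) ℂ := U * (1 - P) * Uᴴ with hSdef
  have hS_psd : S.PosSemidef := by
    have h1 : (U * (1 - P)) * (U * (1 - P))ᴴ = S := by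
      rw [conjTranspose_mul, one_sub_projS0_conjTranspose, hSdef]
      calc U * (1 - P) * ((1 - P) * Uᴴ) = U * ((1 - P) * (1 - P)) * Uᴴ := by
            rw [Matrix.mul_assoc, Matrix.mul_assoc, Matrix.mul_assoc]
        _ = U * (1 - P) * Uᴴ := by rw [one_sub_projS0_mul_self]
    exact h1 ▸ Matrix.posSemidef_self_mul_conjTranspose _
  have hone_sub_S : (1 : Matrix (k × b) (k × b) ℂ) - S = U * P * Uᴴ := by
    have : S = 1 - U * P * Uᴴ := by
      rw [hSdef, Matrix.mul_sub, Matrix.mul_one, Matrix.sub_mul, hU]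
    rw [this, sub_sub_cancel]
  have h1S_psd : ((1 : Matrix (k × b) (k × b) ℂ) - S).PosSemidef := by
    rw [hone_sub_S]
    have h1 : (U * P) * (U * P)ᴴ = U * P * Uᴴ := by
      rw [conjTranspose_mul, hPdef, projS0_conjTranspose]
      calc U * P * (P * Uᴴ) = U * (P * P) * Uᴴ := by
            rw [Matrix.mul_assoc, Matrix.mul_assoc, Matrix.mul_assoc]
        _ = U * P * Uᴴ := by rw [hPdef, projS0_mul_projS0]
    exact h1 ▸ Matrix.posSemidef_self_mul_conjTranspose _
  -- trace of S
  have htrP : P.trace = (Fintype.card h : ℂ) := by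
    rw [hPdef, projS0, trace_kronecker, Matrix.trace_one]
    have : (Matrix.single a0 a0 (1:ℂ)).trace = 1 := by
      simp [Matrix.trace, Matrix.diag, Matrix.single, Finset.sum_ite_eq]
    rw [this, one_mul]
  have htrS : S.trace = ((Fintype.card a : ℂ) - 1) * (Fintype.card h : ℂ) := by
    rw [hSdef, Matrix.trace_mul_cycle, hU', one_mul,
      Matrix.trace_sub, Matrix.trace_one, htrP, Fintype.card_prod]
    push_cast
    ring
  -- the output state
  have hkey := phiPrime_eq a0 U ρ hρ.1.1 hρ.2 hsupp
  set w : ℂ := ((1 : ℂ) / (Fintype.card b : ℂ)) *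
      ((1 : ℂ) / (((Fintype.card a : ℂ) - 1) * (Fintype.card h : ℂ))) with hwdef
  set cR : ℝ := 1 / (((Fintype.card a : ℝ) - 1) * (Fintype.card h : ℝ)) with hcRdef
  have hcR0 : 0 < cR := by
    rw [hcRdef]
    have : (0:ℝ) < ((Fintype.card a : ℝ) - 1) := by linarith
    have hH0 : (0:ℝ) < (Fintype.card h : ℝ) := by exact_mod_cast (by omega : 0 < Fintype.card h)
    positivity
  have hw : w = ((cR / (Fintype.card b : ℝ) : ℝ) : ℂ) := by
    rw [hwdef, hcRdef]
    push_cast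
    ring
  -- positivity of the output
  have hX_psd : (ptraceB S ⊗ₖ (1 : Matrix b b ℂ)).PosSemidef :=
    kronecker_one_posSemidef' (ptraceB_posSemidef' hS_psd)
  have hwr0 : (0:ℝ) ≤ cR / (Fintype.card b : ℝ) := by
    have : (0:ℝ) < (Fintype.card b : ℝ) := by exact_mod_cast (by omega : 0 < Fintype.card b)
    positivity
  have hτ_psd : (PhiPrime a0 U ρ).PosSemidef := by
    rw [hkey, hw]
    exact smul_posSemidef' hX_psd hwr0
  -- trace of the output
  have hτ_tr : (PhiPrime a0 U ρ).trace = 1 := by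
    rw [hkey, Matrix.trace_smul, trace_kronecker, trace_ptraceB', htrS,
      Matrix.trace_one, hwdef, smul_eq_mul]
    field_simp
  -- the operator bound
  have hle : (((cR : ℂ) • (1 : Matrix (k × b) (k × b) ℂ)) - PhiPrime a0 U ρ).PosSemidef := by
    have heq : ((cR : ℂ) • (1 : Matrix (k × b) (k × b) ℂ)) - PhiPrime a0 U ρ
        = ((cR / (Fintype.card b : ℝ) : ℝ) : ℂ) •
          (ptraceB ((1 : Matrix (k × b) (k × b) ℂ) - S) ⊗ₖ (1 : Matrix b b ℂ)) := by
      rw [ptraceB_sub', ptraceB_one', sub_kronecker', smul_kronecker, one_kronecker_one,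
        smul_sub, smul_smul, hkey, hw]
      congr 1
      congr 1
      push_cast
      field_simp
    rw [heq]
    exact smul_posSemidef' (kronecker_one_posSemidef' (ptraceB_posSemidef' h1S_psd)) hwr0
  -- entropy bound
  have hent := entropy_ge_of_le' hτ_psd hτ_tr hcR0 hle
  have hinv : 1 / cR = ((Fintype.card a : ℝ) - 1) * (Fintype.card h : ℝ) := by
    rw [hcRdef, one_div_one_div]
  rw [hinv] at hent
  have harith := arith_bound (Fintype.card a : ℝ) (Fintype.card h : ℝ) hA8
    (by exact_mod_cast hha) hm
  linarith
end
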